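/- Let m ≥ 1 and let a_1,…,a_m be real numbers, each at least 1, such that ∏_{k=1}^m a_k ≤ A for some A ≥ 1. Then Σ_{k=1}^m a_k ≤ m + (log A)·max_{1≤k≤m} a_k. -/

import Mathlib

/-- **Lemma 4.** If `a_1,…,a_m ≥ 1` and `∏_k a_k ≤ A` with `A ≥ 1`, then
`Σ_k a_k ≤ m + (log A) max_k a_k`. -/
theorem sum_le_card_add_log_mul_max (m : ℕ) (hm : 1 ≤ m) (A : ℝ) (hA : 1 ≤ A)
    (a : Fin m → ℝ) (ha : ∀ k, 1 ≤ a k) (hprod : ∏ k, a k ≤ A) :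
    ∑ k, a k ≤ m + Real.log A * ⨆ k, a k := by
  have : NeZero m := ⟨by omega⟩
  set M := ⨆ k, a k with hM
  have hbdd : BddAbove (Set.range a) := (Set.finite_range a).bddAbove
  have hle : ∀ k, a k ≤ M := fun k => le_ciSup hbdd k
  have hM1 : (1 : ℝ) ≤ M := (ha 0).trans (hle 0)
  have hpos : ∀ k, (0 : ℝ) < a k := fun k => lt_of_lt_of_le one_pos (ha k)
  -- key pointwise inequality
  have key : ∀ k, a k - 1 ≤ M * Real.log (a k) := by
    intro k
    have h1 : Real.log (a k)⁻¹ ≤ (a k)⁻¹ - 1 :=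
      Real.log_le_sub_one_of_pos (inv_pos.2 (hpos k))
    rw [Real.log_inv] at h1
    have h2 : 1 - (a k)⁻¹ ≤ Real.log (a k) := by linarith
    have h3 : a k - 1 ≤ a k * Real.log (a k) := by
      have := mul_le_mul_of_nonneg_left h2 (hpos k).le
      have hinv : a k * (a k)⁻¹ = 1 := mul_inv_cancel₀ (hpos k).ne'
      nlinarith
    have hlog0 : 0 ≤ Real.log (a k) := Real.log_nonneg (ha k)
    calc a k - 1 ≤ a k * Real.log (a k) := h3
      _ ≤ M * Real.log (a k) := mul_le_mul_of_nonneg_right (hle k) hlog0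
  have hsum : ∑ k, (a k - 1) ≤ M * ∑ k, Real.log (a k) := by
    rw [Finset.mul_sum]
    exact Finset.sum_le_sum fun k _ => key k
  have hlogprod : ∑ k, Real.log (a k) = Real.log (∏ k, a k) :=
    (Real.log_prod fun k _ => (hpos k).ne').symm
  have hprodpos : (0 : ℝ) < ∏ k, a k := Finset.prod_pos fun k _ => hpos k
  have hlogle : Real.log (∏ k, a k) ≤ Real.log A := Real.log_le_log hprodpos hprod
  have hMlog : M * ∑ k, Real.log (a k) ≤ M * Real.log A := by
    rw [hlogprod]
    exact mul_le_mul_of_nonneg_left hlogle (by linarith)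
  have hsum' : ∑ k, (a k - 1) = ∑ k, a k - m := by
    rw [Finset.sum_sub_distrib]
    simp
  linarith [hsum, hMlog, hsum'.symm.le]
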